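/- Let $w, w' \in [0,1]^n$ with $\mathrm{supp}(w') \subseteq \mathrm{supp}(w)$ and $\|w - w'\|_1 \cdot L \le 1/2$. If $w$ is $(L,\infty)$-good for $(X,y)$ (i.e., $X^\top\mathrm{diag}(w)X$ is invertible and $x_i^\top (X^\top\mathrm{diag}(w)X)^{-1}x_i \le L$ for all $i \in \mathrm{supp}(w)$), then $X^\top \mathrm{diag}(w')X$ is invertible and for all $i \in \mathrm{supp}(w)$, $x_i^\top (X^\top\mathrm{diag}(w')X)^{-1}x_i \le (1 + 2L\|w - w'\|_1)\,L$. -/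

import Mathlib

open Matrix Finset

lemma bilin {n d : ℕ} (X : Matrix (Fin n) (Fin d) ℝ) (c : Fin n → ℝ) (u v : Fin d → ℝ) :
    u ⬝ᵥ ((Xᵀ * Matrix.diagonal c * X) *ᵥ v) = ∑ i, c i * (X i ⬝ᵥ u) * (X i ⬝ᵥ v) := by
  rw [← Matrix.mulVec_mulVec, ← Matrix.mulVec_mulVec, Matrix.dotProduct_mulVec,
    Matrix.vecMul_transpose]
  simp [dotProduct, Matrix.mulVec, Matrix.diagonal_apply, ite_mul, mul_ite,
    Finset.sum_ite_eq, Finset.sum_ite_eq']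
  apply Finset.sum_congr rfl; intro i _; ring

lemma quad {n d : ℕ} (X : Matrix (Fin n) (Fin d) ℝ) (c : Fin n → ℝ) (v : Fin d → ℝ) :
    v ⬝ᵥ ((Xᵀ * Matrix.diagonal c * X) *ᵥ v) = ∑ i, c i * (X i ⬝ᵥ v)^2 := by
  rw [bilin]; exact Finset.sum_congr rfl fun i _ => by ring

lemma cs_w {n d : ℕ} (X : Matrix (Fin n) (Fin d) ℝ) (c : Fin n → ℝ) (hc : ∀ i, 0 ≤ c i)
    (u v : Fin d → ℝ) :
    (∑ i, c i * (X i ⬝ᵥ u) * (X i ⬝ᵥ v))^2 ≤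
      (∑ i, c i * (X i ⬝ᵥ u)^2) * (∑ i, c i * (X i ⬝ᵥ v)^2) := by
  have h := Finset.sum_mul_sq_le_sq_mul_sq Finset.univ
    (fun i => Real.sqrt (c i) * (X i ⬝ᵥ u)) (fun i => Real.sqrt (c i) * (X i ⬝ᵥ v))
  have e : ∀ i : Fin n, Real.sqrt (c i) * Real.sqrt (c i) = c i :=
    fun i => Real.mul_self_sqrt (hc i)
  calc (∑ i, c i * (X i ⬝ᵥ u) * (X i ⬝ᵥ v))^2
      = (∑ i, (Real.sqrt (c i) * (X i ⬝ᵥ u)) * (Real.sqrt (c i) * (X i ⬝ᵥ v)))^2 := by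
        congr 1; refine Finset.sum_congr rfl fun i _ => ?_
        linear_combination (X i ⬝ᵥ u) * (X i ⬝ᵥ v) * (e i).symm
    _ ≤ (∑ i, (Real.sqrt (c i) * (X i ⬝ᵥ u))^2) * (∑ i, (Real.sqrt (c i) * (X i ⬝ᵥ v))^2) := h
    _ = (∑ i, c i * (X i ⬝ᵥ u)^2) * (∑ i, c i * (X i ⬝ᵥ v)^2) := by
        congr 1 <;> refine Finset.sum_congr rfl fun i _ => ?_
        · linear_combination (X i ⬝ᵥ u)^2 * (e i)
        · linear_combination (X i ⬝ᵥ v)^2 * (e i)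

lemma herm' {n d : ℕ} (X : Matrix (Fin n) (Fin d) ℝ) (c : Fin n → ℝ) :
    (Xᵀ * Matrix.diagonal c * X).IsHermitian := by
  have := Matrix.isHermitian_conjTranspose_mul_mul (A := Matrix.diagonal c) X
    (Matrix.isHermitian_diagonal c)
  simpa using this

/-- Removing (or decreasing) weight within the support of an `(L,∞)`-good weight
vector keeps the weighted Gram matrix invertible and blows up leverage scores
by at most a factor `1 + 2L‖w−w'‖₁`. -/
theorem leverage_after_weight_decrease {n d : ℕ} (X : Matrix (Fin n) (Fin d) ℝ)
    (L : ℝ) (hL : 0 < L) (w w' : Fin n → ℝ)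
    (hw : ∀ i, 0 ≤ w i ∧ w i ≤ 1) (hw' : ∀ i, 0 ≤ w' i ∧ w' i ≤ 1)
    (hsupp : ∀ i, w' i ≠ 0 → w i ≠ 0)
    (hclose : (∑ i, |w i - w' i|) * L ≤ 1 / 2)
    (hinv : IsUnit (Xᵀ * Matrix.diagonal w * X).det)
    (hlev : ∀ i, w i ≠ 0 → X i ⬝ᵥ ((Xᵀ * Matrix.diagonal w * X)⁻¹ *ᵥ X i) ≤ L) :
    IsUnit (Xᵀ * Matrix.diagonal w' * X).det ∧
    ∀ i, w i ≠ 0 →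
      X i ⬝ᵥ ((Xᵀ * Matrix.diagonal w' * X)⁻¹ *ᵥ X i) ≤
        (1 + 2 * L * ∑ i, |w i - w' i|) * L := by
  set A := Xᵀ * Matrix.diagonal w * X with hAdef
  set A' := Xᵀ * Matrix.diagonal w' * X with hA'def
  set Δ := ∑ i, |w i - w' i| with hΔdef
  have hΔ0 : 0 ≤ Δ := Finset.sum_nonneg fun i _ => abs_nonneg _
  have h12 : (0:ℝ) ≤ 1 - Δ * L := by linarith
  have hQw0 : ∀ v : Fin d → ℝ, 0 ≤ ∑ j, w j * (X j ⬝ᵥ v)^2 :=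
    fun v => Finset.sum_nonneg fun j _ => mul_nonneg (hw j).1 (sq_nonneg _)
  -- positivity of the quadratic form of A
  have hposA : ∀ v : Fin d → ℝ, v ≠ 0 → 0 < ∑ j, w j * (X j ⬝ᵥ v)^2 := by
    intro v hv
    rcases lt_or_eq_of_le (hQw0 v) with h | h
    · exact h
    · exfalso
      have hterm : ∀ j : Fin n, w j * (X j ⬝ᵥ v) = 0 := by
        intro j
        have := (Finset.sum_eq_zero_iff_of_nonneg
          (fun j _ => mul_nonneg (hw j).1 (sq_nonneg (X j ⬝ᵥ v)))).1 h.symm j (Finset.mem_univ j)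
        rcases mul_eq_zero.1 this with h0 | h0
        · simp [h0]
        · simp [pow_eq_zero_iff] at h0; simp [h0]
      have hAv : A *ᵥ v = 0 := by
        have hz : (A *ᵥ v) ⬝ᵥ (A *ᵥ v) = 0 := by
          rw [bilin X w (A *ᵥ v) v]
          refine Finset.sum_eq_zero fun j _ => ?_
          rw [mul_comm (w j) _, mul_assoc, hterm j, mul_zero]
        exact dotProduct_self_eq_zero.1 hz
      have : v = 0 := by
        have := congrArg (fun u => A⁻¹ *ᵥ u) hAv
        simpa [Matrix.mulVec_mulVec, Matrix.nonsing_inv_mul A hinv] using this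
      exact hv this
  -- key per-coordinate Cauchy–Schwarz bound
  have key : ∀ (v : Fin d → ℝ) (i : Fin n), w i ≠ 0 →
      (X i ⬝ᵥ v)^2 ≤ L * ∑ j, w j * (X j ⬝ᵥ v)^2 := by
    intro v i hi
    set p := A⁻¹ *ᵥ X i with hp
    have hap : A *ᵥ p = X i := by
      rw [hp, Matrix.mulVec_mulVec, Matrix.mul_nonsing_inv A hinv, Matrix.one_mulVec]
    have h1 : X i ⬝ᵥ v = ∑ j, w j * (X j ⬝ᵥ v) * (X j ⬝ᵥ p) := by
      rw [← bilin X w v p, ← hAdef, hap, dotProduct_comm]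
    have h2 : ∑ j, w j * (X j ⬝ᵥ p)^2 ≤ L := by
      have hq : p ⬝ᵥ (A *ᵥ p) = ∑ j, w j * (X j ⬝ᵥ p)^2 := quad X w p
      rw [hap, dotProduct_comm] at hq
      rw [← hq]; exact hlev i hi
    have h3 := cs_w X w (fun j => (hw j).1) v p
    have h4 : 0 ≤ ∑ j, w j * (X j ⬝ᵥ p)^2 :=
      Finset.sum_nonneg fun j _ => mul_nonneg (hw j).1 (sq_nonneg _)
    calc (X i ⬝ᵥ v)^2 = (∑ j, w j * (X j ⬝ᵥ v) * (X j ⬝ᵥ p))^2 := by rw [h1]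
      _ ≤ (∑ j, w j * (X j ⬝ᵥ v)^2) * (∑ j, w j * (X j ⬝ᵥ p)^2) := h3
      _ ≤ (∑ j, w j * (X j ⬝ᵥ v)^2) * L := mul_le_mul_of_nonneg_left h2 (hQw0 v)
      _ = L * ∑ j, w j * (X j ⬝ᵥ v)^2 := mul_comm _ _
  -- lower bound on the perturbed quadratic form
  have hlow : ∀ v : Fin d → ℝ,
      (1 - Δ * L) * (∑ j, w j * (X j ⬝ᵥ v)^2) ≤ ∑ j, w' j * (X j ⬝ᵥ v)^2 := by
    intro v
    have hdiff : ∑ j, (w j - w' j) * (X j ⬝ᵥ v)^2 ≤ Δ * (L * ∑ j, w j * (X j ⬝ᵥ v)^2) := by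
      calc ∑ j, (w j - w' j) * (X j ⬝ᵥ v)^2
          ≤ ∑ j, |w j - w' j| * (L * ∑ k, w k * (X k ⬝ᵥ v)^2) := by
            refine Finset.sum_le_sum fun j _ => ?_
            by_cases hj : w j = 0
            · have hj' : w' j = 0 := by
                by_contra hc; exact hsupp j hc hj
              have hz : w j - w' j = 0 := by rw [hj, hj']; ring
              rw [hz, zero_mul]
              exact mul_nonneg (abs_nonneg _) (mul_nonneg hL.le (hQw0 v))
            · calc (w j - w' j) * (X j ⬝ᵥ v)^2
                  ≤ |w j - w' j| * (X j ⬝ᵥ v)^2 :=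
                    mul_le_mul_of_nonneg_right (le_abs_self _) (sq_nonneg _)
                _ ≤ |w j - w' j| * (L * ∑ k, w k * (X k ⬝ᵥ v)^2) :=
                    mul_le_mul_of_nonneg_left (key v j hj) (abs_nonneg _)
        _ = Δ * (L * ∑ j, w j * (X j ⬝ᵥ v)^2) := by rw [hΔdef, Finset.sum_mul]
    have hsub : ∑ j, w' j * (X j ⬝ᵥ v)^2
        = (∑ j, w j * (X j ⬝ᵥ v)^2) - ∑ j, (w j - w' j) * (X j ⬝ᵥ v)^2 := by
      rw [← Finset.sum_sub_distrib]
      exact Finset.sum_congr rfl fun j _ => by ring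
    nlinarith [hdiff, hsub]
  -- positive definiteness of A'
  have hpd : A'.PosDef := by
    refine Matrix.PosDef.of_dotProduct_mulVec_pos (herm' X w') fun v hv => ?_
    have hsv : star v = v := funext fun _ => star_trivial _
    rw [hsv, hA'def, quad X w' v]
    have h1 := hlow v
    have h2 := hposA v hv
    nlinarith [mul_nonneg h12 (hQw0 v)]
  have hunit : IsUnit A'.det := hpd.det_pos.ne'.isUnit
  refine ⟨hunit, fun i hi => ?_⟩
  set v := A'⁻¹ *ᵥ X i with hv
  have hav : A' *ᵥ v = X i := by
    rw [hv, Matrix.mulVec_mulVec, Matrix.mul_nonsing_inv A' hunit, Matrix.one_mulVec]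
  have hs : X i ⬝ᵥ v = ∑ j, w' j * (X j ⬝ᵥ v)^2 := by
    have hq : v ⬝ᵥ (A' *ᵥ v) = ∑ j, w' j * (X j ⬝ᵥ v)^2 := quad X w' v
    rw [hav] at hq
    rw [dotProduct_comm, hq]
  have hk := key v i hi
  have hl := hlow v
  have h0 := hQw0 v
  have hs0 : 0 ≤ X i ⬝ᵥ v := by
    have := mul_nonneg h12 h0
    linarith [hl, hs]
  have hmain : (1 - Δ * L) * (X i ⬝ᵥ v)^2 ≤ L * (X i ⬝ᵥ v) := by
    calc (1 - Δ * L) * (X i ⬝ᵥ v)^2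
        ≤ (1 - Δ * L) * (L * ∑ j, w j * (X j ⬝ᵥ v)^2) := mul_le_mul_of_nonneg_left hk h12
      _ = L * ((1 - Δ * L) * ∑ j, w j * (X j ⬝ᵥ v)^2) := by ring
      _ ≤ L * (X i ⬝ᵥ v) := by
          rw [hs]; exact mul_le_mul_of_nonneg_left hl hL.le
  have ht0 : 0 ≤ Δ * L := mul_nonneg hΔ0 hL.le
  by_cases hz : X i ⬝ᵥ v = 0
  · rw [hz]; nlinarith [hΔ0, hL, ht0]
  · have hspos : 0 < X i ⬝ᵥ v := lt_of_le_of_ne hs0 (Ne.symm hz)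
    have h5 : (1 - Δ * L) * (X i ⬝ᵥ v) ≤ L :=
      le_of_mul_le_mul_right (by nlinarith [hmain]) hspos
    nlinarith [h5, ht0, hclose, hspos.le,
      mul_le_mul_of_nonneg_right h5 (show (0:ℝ) ≤ 1 + 2 * L * Δ by nlinarith),
      mul_nonneg (mul_nonneg hspos.le ht0) (show (0:ℝ) ≤ 1 - 2 * (Δ * L) by linarith)]
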